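/- arXiv:1901.01517 — 6 statements merged into one kernel-verified Lean document; each statement's English description precedes it below -/
import Mathlib

section
/- For all times t ≥ 0 and all nodes i ∈ 𝒩 and flows k ∈ 𝒦, the physical queue is dominated by the virtual queues: Q_{ik}(t) ≤ X_{ik}(t) + Σ_{j∈𝒩} Y_{ijk}(t) − Σ_{j∈𝒰} Y_{jik}(t). -/
open Finset

/-- Tracking-MaxWeight: the physical queue is dominated by the virtual queues. -/
theorem tmw_queue_domination
    {Node Flow : Type*} [Fintype Node] [DecidableEq Node] [Fintype Flow]
    (U : Finset Node)  -- uncontrollable nodes; controllable nodes are `Uᶜ`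
    (Q X : ℕ → Node → Flow → ℝ)
    (Y : ℕ → Node → Node → Flow → ℝ)
    (a : ℕ → Node → Flow → ℝ)
    (g ftil : ℕ → Node → Node → Flow → ℝ)
    (Δ : ℕ → Node → Node → Flow → ℝ)
    (ha : ∀ t i k, 0 ≤ a t i k)
    (hg : ∀ t i j k, 0 ≤ g t i j k)
    (hftil : ∀ t i j k, 0 ≤ ftil t i j k)
    (hΔ : ∀ t i j k, Δ t i j k = if i ∈ U then g t i j k - ftil t i j k else 0)
    (hQ0 : ∀ i k, 0 ≤ Q 0 i k)
    (hQc : ∀ t i k, i ∉ U →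
      Q (t+1) i k = Q t i k + a t i k + (∑ j ∈ Uᶜ, g t j i k) + (∑ j ∈ U, ftil t j i k)
        - ∑ j, g t i j k)
    (hQu : ∀ t i k, i ∈ U →
      Q (t+1) i k = Q t i k + a t i k + (∑ j ∈ Uᶜ, g t j i k) + (∑ j ∈ U, ftil t j i k)
        - ∑ j, ftil t i j k)
    (hX0 : ∀ i k, X 0 i k = Q 0 i k)
    (hX : ∀ t i k,
      X (t+1) i k = max (X t i k + a t i k + (∑ j, g t j i k) - ∑ j, g t i j k) 0)
    (hY0 : ∀ i j k, Y 0 i j k = 0)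
    (hY : ∀ t i j k, Y (t+1) i j k = Y t i j k + Δ t i j k) :
    ∀ t i k, Q t i k ≤ X t i k + (∑ j, Y t i j k) - ∑ j ∈ U, Y t j i k := by
  intro t
  induction t with
  | zero =>
    intro i k
    simp [hX0, hY0]
  | succ t ih =>
    intro i k
    have hXge : X t i k + a t i k + (∑ j, g t j i k) - (∑ j, g t i j k)
        ≤ X (t+1) i k := by
      rw [hX]; exact le_max_left _ _
    have hsplit : (∑ j, g t j i k) = (∑ j ∈ Uᶜ, g t j i k) + ∑ j ∈ U, g t j i k := by
      rw [Finset.sum_compl_add_sum]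
    have hYs : (∑ j, Y (t+1) i j k) = (∑ j, Y t i j k) + ∑ j, Δ t i j k := by
      simp [hY, Finset.sum_add_distrib]
    have hYs2 : (∑ j ∈ U, Y (t+1) j i k) = (∑ j ∈ U, Y t j i k) + ∑ j ∈ U, Δ t j i k := by
      simp [hY, Finset.sum_add_distrib]
    have hΔU : ∑ j ∈ U, Δ t j i k = (∑ j ∈ U, g t j i k) - ∑ j ∈ U, ftil t j i k := by
      rw [← Finset.sum_sub_distrib]
      exact Finset.sum_congr rfl fun j hj => by simp [hΔ, hj]
    have ihp := ih i k
    by_cases hi : i ∈ U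
    · have hΔi : ∑ j, Δ t i j k = (∑ j, g t i j k) - ∑ j, ftil t i j k := by
        rw [← Finset.sum_sub_distrib]
        exact Finset.sum_congr rfl fun j _ => by simp [hΔ, hi]
      rw [hQu t i k hi, hYs, hYs2, hΔi, hΔU]
      linarith [hXge, hsplit]
    · have hΔi : ∑ j, Δ t i j k = 0 := by
        simp [hΔ, hi]
      rw [hQc t i k hi, hYs, hYs2, hΔi, hΔU]
      linarith [hXge, hsplit]
end

section
/- Suppose T ≥ 1 is an integer with Σ_{s∈S} n_L(s) ≤ T, and every episode ℓ ∈ {1, …, L−1} ends by the doubling criterion, i.e., for each such ℓ there exists s ∈ S with v_ℓ(s) ≥ max{1, n_ℓ(s)}. Then the total number of episodes satisfies L ≤ 1 + |S| (log₂ T + 1). -/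
open Finset

/-- Bound on the total number of episodes under the doubling stopping criterion. -/
theorem episode_count_bound
    {S : Type*} [Fintype S] [Nonempty S]
    (L : ℕ) (hL : 1 ≤ L)
    (v n : ℕ → S → ℕ)
    (hn : ∀ ℓ s, n ℓ s = ∑ i ∈ Finset.Ico 1 ℓ, v i s)
    (T : ℕ) (hT : 1 ≤ T)
    (hTn : ∑ s, n L s ≤ T)
    (hdouble : ∀ ℓ ∈ Finset.Ico 1 L, ∃ s, v ℓ s ≥ max 1 (n ℓ s)) :
    (L : ℝ) ≤ 1 + (Fintype.card S : ℝ) * (Real.logb 2 T + 1) := by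
  classical
  set c : ℕ → S := fun ℓ =>
    if h : ∃ s, v ℓ s ≥ max 1 (n ℓ s) then h.choose else Classical.arbitrary S with hc
  have hcspec : ∀ ℓ ∈ Finset.Ico 1 L, v ℓ (c ℓ) ≥ max 1 (n ℓ (c ℓ)) := by
    intro ℓ hℓ
    obtain ⟨s, hs⟩ := hdouble ℓ hℓ
    have h : ∃ s, v ℓ s ≥ max 1 (n ℓ s) := ⟨s, hs⟩
    simp only [hc, dif_pos h]
    exact h.choose_spec
  -- key induction : number of triggers for s up to episode m
  have key : ∀ m, m ≤ L → ∀ s, 2 ^ (((Finset.Ico 1 m).filter (fun ℓ => c ℓ = s)).card)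
      ≤ max 1 (2 * n m s) := by
    intro m
    induction m with
    | zero => intro _ s; simp
    | succ m ih =>
      intro hm s
      have hmL : m ≤ L := Nat.le_of_succ_le hm
      have ihm := ih hmL s
      by_cases hm1 : 1 ≤ m
      · have hins : Finset.Ico 1 (m + 1) = insert m (Finset.Ico 1 m) :=
          Nat.Ico_succ_right_eq_insert_Ico hm1
        have hnotmem : m ∉ Finset.Ico 1 m := by simp
        have hnsucc : n (m + 1) s = n m s + v m s := by
          rw [hn, hn, hins, Finset.sum_insert hnotmem]; ring
        by_cases htrig : c m = s
        · -- m is a trigger for s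
          have hmem : m ∈ Finset.Ico 1 L := Finset.mem_Ico.mpr ⟨hm1, hm⟩
          have hv := hcspec m hmem
          rw [htrig] at hv
          have hcard : ((Finset.Ico 1 (m + 1)).filter (fun ℓ => c ℓ = s)).card
              = ((Finset.Ico 1 m).filter (fun ℓ => c ℓ = s)).card + 1 := by
            rw [hins, Finset.filter_insert, if_pos htrig,
              Finset.card_insert_of_notMem (by simp [hnotmem])]
          rw [hcard, pow_succ]
          by_cases hn0 : n m s = 0
          · -- no prior triggers for s
            have hempty : ((Finset.Ico 1 m).filter (fun ℓ => c ℓ = s)) = ∅ := by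
              rw [Finset.eq_empty_iff_forall_notMem]
              intro ℓ hℓ
              rw [Finset.mem_filter] at hℓ
              obtain ⟨hℓm, hℓs⟩ := hℓ
              have hℓL : ℓ ∈ Finset.Ico 1 L := by
                rw [Finset.mem_Ico] at hℓm ⊢
                exact ⟨hℓm.1, lt_of_lt_of_le hℓm.2 hmL⟩
              have hvℓ := hcspec ℓ hℓL
              rw [hℓs] at hvℓ
              have h1 : 1 ≤ v ℓ s := le_trans (le_max_left _ _) hvℓ
              have : v ℓ s ≤ n m s := by
                rw [hn]
                exact Finset.single_le_sum (f := fun i => v i s) (fun i _ => Nat.zero_le _) hℓm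
              omega
            have hv1 : 1 ≤ v m s := le_trans (le_max_left _ _) hv
            rw [hempty]
            simp only [Finset.card_empty, pow_zero]
            have : 2 ≤ 2 * n (m + 1) s := by omega
            omega
          · -- prior count positive, trigger doubles n
            have hmax : max 1 (2 * n m s) = 2 * n m s := by omega
            rw [hmax] at ihm
            have hvn : n m s ≤ v m s := le_trans (le_max_right _ _) hv
            have h2 : 2 * n m s ≤ n (m + 1) s := by omega
            have : max 1 (2 * n (m + 1) s) = 2 * n (m + 1) s := by omega
            omega
        · -- m is not a trigger for s : count unchanged, n nondecreasing
          have hcard : ((Finset.Ico 1 (m + 1)).filter (fun ℓ => c ℓ = s)).card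
              = ((Finset.Ico 1 m).filter (fun ℓ => c ℓ = s)).card := by
            rw [hins, Finset.filter_insert, if_neg htrig]
          rw [hcard]
          have hmono : n m s ≤ n (m + 1) s := by omega
          omega
      · -- m = 0
        have hm0 : m = 0 := by omega
        subst hm0
        simp
  -- per-state count k s
  set k : S → ℕ := fun s => ((Finset.Ico 1 L).filter (fun ℓ => c ℓ = s)).card with hk
  have hkT : ∀ s, 2 ^ k s ≤ 2 * T := by
    intro s
    have h1 := key L le_rfl s
    have h2 : n L s ≤ T :=
      le_trans (Finset.single_le_sum (fun i _ => Nat.zero_le _) (Finset.mem_univ s)) hTn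
    have : max 1 (2 * n L s) ≤ 2 * T := by omega
    exact le_trans h1 this
  have hkR : ∀ s, (k s : ℝ) ≤ Real.logb 2 T + 1 := by
    intro s
    have h1 : ((2 : ℝ)) ^ k s ≤ 2 * T := by
      have := hkT s
      calc ((2 : ℝ)) ^ k s = ((2 ^ k s : ℕ) : ℝ) := by push_cast; ring
        _ ≤ ((2 * T : ℕ) : ℝ) := by exact_mod_cast this
        _ = 2 * T := by push_cast; ring
    have hlog : Real.logb 2 ((2 : ℝ) ^ k s) ≤ Real.logb 2 (2 * T) :=
      Real.logb_le_logb_of_le (by norm_num : (1:ℝ) < 2) (by positivity) h1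
    have hpow : Real.logb 2 ((2 : ℝ) ^ k s) = k s := by
      rw [Real.logb_pow, Real.logb_self_eq_one (by norm_num)]
      ring
    have hmul : Real.logb 2 ((2 : ℝ) * T) = 1 + Real.logb 2 T := by
      rw [Real.logb_mul (by norm_num) (by positivity),
        Real.logb_self_eq_one (by norm_num)]
    rw [hpow, hmul] at hlog
    linarith
  -- sum of counts = L - 1
  have hsum : ∑ s, k s = L - 1 := by
    have := Finset.card_eq_sum_card_fiberwise
      (f := c) (s := Finset.Ico 1 L) (t := Finset.univ) (fun x _ => Finset.mem_univ _)
    rw [Nat.card_Ico] at this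
    exact this.symm
  have hsumR : (L : ℝ) - 1 = ∑ s, (k s : ℝ) := by
    have : ((L - 1 : ℕ) : ℝ) = (L : ℝ) - 1 := by
      have : (1 : ℕ) ≤ L := hL
      push_cast [Nat.cast_sub this]
      ring
    rw [← this, ← hsum]
    push_cast
    ring
  have hbound : ∑ s, (k s : ℝ) ≤ (Fintype.card S : ℝ) * (Real.logb 2 T + 1) := by
    calc ∑ s, (k s : ℝ) ≤ ∑ _s : S, (Real.logb 2 T + 1) :=
          Finset.sum_le_sum (fun s _ => hkR s)
      _ = (Fintype.card S : ℝ) * (Real.logb 2 T + 1) := by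
          rw [Finset.sum_const, Finset.card_univ, nsmul_eq_mul]
  linarith [hsumR, hbound]
end

section
/- For any sequence of real numbers z_1, …, z_n satisfying 0 ≤ z_ℓ ≤ Z_{ℓ−1} for all ℓ, where Z_ℓ := max{1, Σ_{i=1}^{ℓ} z_i} (in particular Z_0 = 1), it holds that Σ_{ℓ=1}^{n} z_ℓ / √(Z_{ℓ−1}) ≤ (√2 + 1) √(Z_n). -/
open Finset

lemma aux_sum_div_sqrt_bound (z Z : ℕ → ℝ)
    (hZ : ∀ ℓ, Z ℓ = max 1 (∑ i ∈ Finset.Icc 1 ℓ, z i)) :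
    ∀ n : ℕ, (∀ ℓ ∈ Finset.Icc 1 n, 0 ≤ z ℓ ∧ z ℓ ≤ Z (ℓ - 1)) →
    ∑ ℓ ∈ Finset.Icc 1 n, z ℓ / Real.sqrt (Z (ℓ - 1))
      ≤ (Real.sqrt 2 + 1) * (Real.sqrt (Z n) - 1)
        + min (∑ i ∈ Finset.Icc 1 n, z i) 1 := by
  intro n
  induction n with
  | zero =>
    intro _
    simp [hZ 0]
  | succ n ih =>
    intro hz
    have hz' : ∀ ℓ ∈ Finset.Icc 1 n, 0 ≤ z ℓ ∧ z ℓ ≤ Z (ℓ - 1) := by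
      intro ℓ hℓ
      have h := Finset.mem_Icc.mp hℓ
      exact hz ℓ (Finset.mem_Icc.mpr ⟨h.1, le_trans h.2 (Nat.le_succ n)⟩)
    have IH := ih hz'
    set T : ℝ := ∑ i ∈ Finset.Icc 1 n, z i with hT
    have hTnn : 0 ≤ T := Finset.sum_nonneg fun i hi => (hz' i hi).1
    have hzn := hz (n + 1) (Finset.mem_Icc.mpr ⟨Nat.le_add_left 1 n, le_refl _⟩)
    have hsucc : (n + 1) - 1 = n := rfl
    rw [hsucc] at hzn
    obtain ⟨hz0, hzle⟩ := hzn
    have hZn : Z n = max 1 T := hZ n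
    have hsum1 : ∑ ℓ ∈ Finset.Icc 1 (n + 1), z ℓ / Real.sqrt (Z (ℓ - 1))
        = (∑ ℓ ∈ Finset.Icc 1 n, z ℓ / Real.sqrt (Z (ℓ - 1)))
          + z (n + 1) / Real.sqrt (Z n) := by
      rw [Finset.sum_Icc_succ_top (by omega : 1 ≤ n + 1)]
      norm_num
    have hsum2 : ∑ i ∈ Finset.Icc 1 (n + 1), z i = T + z (n + 1) := by
      rw [Finset.sum_Icc_succ_top (by omega : 1 ≤ n + 1)]
    have hZn1 : Z (n + 1) = max 1 (T + z (n + 1)) := by rw [hZ (n + 1), hsum2]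
    rw [hsum1, hsum2]
    have h2 : (0:ℝ) ≤ 2 := by norm_num
    have hs2 : Real.sqrt 2 ^ 2 = 2 := Real.sq_sqrt h2
    have hs2nn : 0 ≤ Real.sqrt 2 := Real.sqrt_nonneg 2
    by_cases hA : T + z (n + 1) ≤ 1
    · -- Case A : partial sum stays ≤ 1
      have hT1 : T ≤ 1 := by linarith
      have hZnval : Z n = 1 := by rw [hZn]; exact max_eq_left hT1
      have hZn1val : Z (n + 1) = 1 := by rw [hZn1]; exact max_eq_left hA
      rw [hZnval, hZn1val, Real.sqrt_one]
      rw [hZnval, Real.sqrt_one] at IH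
      have hminT : min T 1 = T := min_eq_left hT1
      have hminT1 : min (T + z (n + 1)) 1 = T + z (n + 1) := min_eq_left hA
      rw [hminT] at IH
      rw [hminT1]
      have : z (n + 1) / 1 = z (n + 1) := div_one _
      rw [this]
      linarith
    · push_neg at hA
      by_cases hB : T ≤ 1
      · -- Case B : partial sum crosses 1
        have hZnval : Z n = 1 := by rw [hZn]; exact max_eq_left hB
        have ht2 : T + z (n + 1) ≤ 2 := by
          have : z (n + 1) ≤ 1 := by rw [hZnval] at hzle; exact hzle
          linarith
        have hZn1val : Z (n + 1) = T + z (n + 1) := by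
          rw [hZn1]; exact max_eq_right (le_of_lt hA)
        rw [hZnval, hZn1val, Real.sqrt_one]
        rw [hZnval, Real.sqrt_one] at IH
        have hminT : min T 1 = T := min_eq_left hB
        rw [hminT] at IH
        have hminT1 : min (T + z (n + 1)) 1 = 1 := min_eq_right (le_of_lt hA)
        rw [hminT1]
        have hd1 : z (n + 1) / 1 = z (n + 1) := div_one _
        rw [hd1]
        set t : ℝ := T + z (n + 1) with ht
        set s : ℝ := Real.sqrt t with hs
        have hsnn : 0 ≤ s := Real.sqrt_nonneg t
        have hssq : s ^ 2 = t := Real.sq_sqrt (by linarith)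
        have hs1 : 1 ≤ s := by
          rw [hs]
          rw [show (1:ℝ) = Real.sqrt 1 from (Real.sqrt_one).symm]
          exact Real.sqrt_le_sqrt (by linarith)
        have hsle : s ≤ Real.sqrt 2 := by
          rw [hs]; exact Real.sqrt_le_sqrt ht2
        -- need : T + z (n+1) ≤ (√2+1)(s−1) + 1, i.e. t ≤ (√2+1)s − √2
        have key : t ≤ (Real.sqrt 2 + 1) * s - Real.sqrt 2 := by
          nlinarith [mul_nonneg (by linarith : (0:ℝ) ≤ s - 1)
            (by linarith : (0:ℝ) ≤ Real.sqrt 2 - s)]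
        linarith
      · -- Case C : partial sum already above 1
        push_neg at hB
        have hZnval : Z n = T := by rw [hZn]; exact max_eq_right (le_of_lt hB)
        have hZn1val : Z (n + 1) = T + z (n + 1) := by
          rw [hZn1]; exact max_eq_right (by linarith)
        rw [hZnval, hZn1val]
        rw [hZnval] at IH hzle
        have hminT : min T 1 = 1 := min_eq_right (le_of_lt hB)
        rw [hminT] at IH
        have hminT1 : min (T + z (n + 1)) 1 = 1 := min_eq_right (by linarith)
        rw [hminT1]
        set a : ℝ := Real.sqrt T with ha
        set b : ℝ := Real.sqrt (T + z (n + 1)) with hb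
        have hann : 0 ≤ a := Real.sqrt_nonneg T
        have hbnn : 0 ≤ b := Real.sqrt_nonneg _
        have hasq : a ^ 2 = T := Real.sq_sqrt (by linarith)
        have hbsq : b ^ 2 = T + z (n + 1) := Real.sq_sqrt (by linarith)
        have ha1 : 1 ≤ a := by
          rw [ha, show (1:ℝ) = Real.sqrt 1 from (Real.sqrt_one).symm]
          exact Real.sqrt_le_sqrt (le_of_lt hB)
        have hba : a ≤ b := by
          rw [ha, hb]; exact Real.sqrt_le_sqrt (by linarith)
        have hb2a : b ≤ Real.sqrt 2 * a := by
          nlinarith [mul_nonneg hs2nn hann]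
        have hapos : (0:ℝ) < a := by linarith
        have key : z (n + 1) / a ≤ (Real.sqrt 2 + 1) * (b - a) := by
          rw [div_le_iff₀ hapos]
          nlinarith [mul_nonneg (by linarith : (0:ℝ) ≤ b - a)
            (by linarith : (0:ℝ) ≤ (Real.sqrt 2 + 1) * a - (b + a))]
        linarith

/-- Lemma 19 of Jaksch et al.: for a sequence with `0 ≤ z_ℓ ≤ Z_{ℓ-1}` where
`Z_ℓ = max 1 (z_1 + ⋯ + z_ℓ)`, we have `∑ z_ℓ / √(Z_{ℓ-1}) ≤ (√2 + 1) √(Z_n)`. -/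
theorem sum_div_sqrt_partial_sums_bound
    (n : ℕ) (hn : 1 ≤ n) (z : ℕ → ℝ)
    (Z : ℕ → ℝ)
    (hZ : ∀ ℓ, Z ℓ = max 1 (∑ i ∈ Finset.Icc 1 ℓ, z i))
    (hz : ∀ ℓ ∈ Finset.Icc 1 n, 0 ≤ z ℓ ∧ z ℓ ≤ Z (ℓ - 1)) :
    ∑ ℓ ∈ Finset.Icc 1 n, z ℓ / Real.sqrt (Z (ℓ - 1))
      ≤ (Real.sqrt 2 + 1) * Real.sqrt (Z n) := by
  have h := aux_sum_div_sqrt_bound z Z hZ n hz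
  have hmin : min (∑ i ∈ Finset.Icc 1 n, z i) 1 ≤ 1 := min_le_right _ _
  have hs2 : 0 ≤ Real.sqrt 2 := Real.sqrt_nonneg 2
  linarith
end

section
/- Suppose v_ℓ(s) ≤ max{1, n_ℓ(s)} for every episode ℓ ∈ {1, …, L} and every s ∈ S. Let n(s) = Σ_{ℓ=1}^{L} v_ℓ(s) and T = Σ_{s∈S} n(s). Then Σ_{s∈S} Σ_{ℓ=1}^{L} v_ℓ(s) / √(max{1, n_ℓ(s)}) ≤ (√2 + 1) Σ_{s∈S} √(n(s)) ≤ (√2 + 1) √(|S| · T). -/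
open Finset

lemma key_step (Z z : ℕ) (hz : z ≤ max 1 Z) :
    (z : ℝ) / Real.sqrt ((max 1 Z : ℕ) : ℝ)
      ≤ (Real.sqrt 2 + 1) * (Real.sqrt ((Z + z : ℕ) : ℝ) - Real.sqrt (Z : ℝ)) := by
  rcases Nat.eq_zero_or_pos Z with hZ | hZ
  · subst hZ
    have hz1 : z ≤ 1 := by simpa using hz
    interval_cases z
    · simp
    · have e1 : ((max 1 0 : ℕ) : ℝ) = 1 := by norm_num
      have e2 : ((0 + 1 : ℕ) : ℝ) = 1 := by norm_num
      rw [e1, e2, Real.sqrt_one]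
      norm_num
  · have hmax : max 1 Z = Z := Nat.max_eq_right hZ
    rw [hmax]
    set a := Real.sqrt (Z : ℝ) with ha
    set b := Real.sqrt ((Z + z : ℕ) : ℝ) with hb
    have ha2 : a ^ 2 = (Z : ℝ) := Real.sq_sqrt (by positivity)
    have hb2 : b ^ 2 = (Z : ℝ) + z := by
      rw [hb, Nat.cast_add, Real.sq_sqrt (by positivity)]
    have ha1 : (1:ℝ) ≤ a := by
      rw [ha, show (1:ℝ) = Real.sqrt 1 by simp]
      exact Real.sqrt_le_sqrt (by exact_mod_cast hZ)
    have hba : a ≤ b := by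
      rw [ha, hb]
      exact Real.sqrt_le_sqrt (by push_cast; linarith [Nat.cast_nonneg (α := ℝ) z])
    have hc2 : Real.sqrt 2 ^ 2 = 2 := Real.sq_sqrt (by norm_num)
    have hc0 : (0:ℝ) ≤ Real.sqrt 2 := Real.sqrt_nonneg 2
    have hzZ : (z : ℝ) ≤ Z := by exact_mod_cast hz.trans_eq hmax
    have hbc : b ≤ Real.sqrt 2 * a := by
      rw [hb, ha, ← Real.sqrt_mul (by norm_num)]
      exact Real.sqrt_le_sqrt (by push_cast; linarith)
    rw [div_le_iff₀ (by linarith)]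
    have hzab : (z : ℝ) = b ^ 2 - a ^ 2 := by rw [ha2, hb2]; ring
    nlinarith [mul_nonneg (sub_nonneg.2 hba) (sub_nonneg.2 hbc)]

lemma key (L : ℕ) (v : ℕ → ℕ) (n : ℕ → ℕ)
    (hn : ∀ ℓ, n ℓ = ∑ i ∈ Finset.Ico 1 ℓ, v i)
    (hv : ∀ ℓ ∈ Finset.Icc 1 L, v ℓ ≤ max 1 (n ℓ)) :
    ∑ ℓ ∈ Finset.Icc 1 L, (v ℓ : ℝ) / Real.sqrt ((max 1 (n ℓ) : ℕ) : ℝ)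
      ≤ (Real.sqrt 2 + 1) * Real.sqrt ((n (L + 1) : ℕ) : ℝ) := by
  induction L with
  | zero => simp; positivity
  | succ L ih =>
      have hsum : ∑ ℓ ∈ Finset.Icc 1 (L + 1), (v ℓ : ℝ) / Real.sqrt ((max 1 (n ℓ) : ℕ) : ℝ)
          = (∑ ℓ ∈ Finset.Icc 1 L, (v ℓ : ℝ) / Real.sqrt ((max 1 (n ℓ) : ℕ) : ℝ))
            + (v (L+1) : ℝ) / Real.sqrt ((max 1 (n (L+1)) : ℕ) : ℝ) := by
        rw [Finset.sum_Icc_succ_top (by omega)]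
      have hih := ih (fun ℓ hℓ => hv ℓ (Finset.mem_Icc.2 ⟨(Finset.mem_Icc.1 hℓ).1,
        (Finset.mem_Icc.1 hℓ).2.trans (Nat.le_succ L)⟩))
      have hnsucc : n (L + 2) = n (L + 1) + v (L + 1) := by
        rw [hn, hn, Finset.sum_Ico_succ_top (by omega)]
      have hks := key_step (n (L+1)) (v (L+1)) (hv (L+1) (Finset.mem_Icc.2 ⟨by omega, le_refl _⟩))
      rw [hsum]
      rw [hnsucc]
      calc _ ≤ (Real.sqrt 2 + 1) * Real.sqrt ((n (L + 1) : ℕ) : ℝ)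
            + (Real.sqrt 2 + 1) * (Real.sqrt ((n (L+1) + v (L+1) : ℕ) : ℝ)
              - Real.sqrt ((n (L+1) : ℕ) : ℝ)) := add_le_add hih hks
        _ = (Real.sqrt 2 + 1) * Real.sqrt ((n (L+1) + v (L+1) : ℕ) : ℝ) := by ring

/-- Visit-count bound: `∑_s ∑_ℓ v_ℓ(s) / √(max 1 (n_ℓ(s))) ≤ (√2+1) ∑_s √(n(s))
  ≤ (√2+1) √(|S| T)`. -/
theorem visit_count_sqrt_bound
    {S : Type*} [Fintype S] [Nonempty S]
    (L : ℕ) (v n : ℕ → S → ℕ)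
    (hn : ∀ ℓ s, n ℓ s = ∑ i ∈ Finset.Ico 1 ℓ, v i s)
    (hv : ∀ ℓ ∈ Finset.Icc 1 L, ∀ s : S, v ℓ s ≤ max 1 (n ℓ s))
    (ntot : S → ℕ) (hntot : ∀ s, ntot s = ∑ ℓ ∈ Finset.Icc 1 L, v ℓ s)
    (T : ℕ) (hT : T = ∑ s, ntot s) :
    (∑ s, ∑ ℓ ∈ Finset.Icc 1 L, (v ℓ s : ℝ) / Real.sqrt ((max 1 (n ℓ s) : ℕ) : ℝ)
      ≤ (Real.sqrt 2 + 1) * ∑ s, Real.sqrt ((ntot s : ℝ))) ∧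
    ((Real.sqrt 2 + 1) * ∑ s, Real.sqrt ((ntot s : ℝ))
      ≤ (Real.sqrt 2 + 1) * Real.sqrt ((Fintype.card S : ℝ) * (T : ℝ))) := by
  constructor
  · rw [Finset.mul_sum]
    apply Finset.sum_le_sum
    intro s _
    have h := key L (fun ℓ => v ℓ s) (fun ℓ => n ℓ s) (fun ℓ => hn ℓ s)
      (fun ℓ hℓ => hv ℓ hℓ s)
    have hne : ntot s = n (L + 1) s := by
      rw [hntot, hn]
      congr 1
    rw [hne]
    exact h
  · apply mul_le_mul_of_nonneg_left _ (by positivity)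
    have hcs : (∑ s : S, Real.sqrt ((ntot s : ℝ))) ^ 2
        ≤ (Fintype.card S : ℝ) * ∑ s : S, Real.sqrt ((ntot s : ℝ)) ^ 2 :=
      sq_sum_le_card_mul_sum_sq
    have hsq : ∀ s : S, Real.sqrt ((ntot s : ℝ)) ^ 2 = (ntot s : ℝ) :=
      fun s => Real.sq_sqrt (by positivity)
    apply Real.le_sqrt_of_sq_le
    calc (∑ s : S, Real.sqrt ((ntot s : ℝ))) ^ 2
        ≤ (Fintype.card S : ℝ) * ∑ s : S, Real.sqrt ((ntot s : ℝ)) ^ 2 := hcs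
      _ = (Fintype.card S : ℝ) * (T : ℝ) := by
          rw [hT]; push_cast; simp [hsq]
end

section
/- The total number of dropped packets satisfies Σ_{t=0}^{T−1} d(t) ≤ N·D · B / (V − N·D). Consequently, if the total number of exogenous arrivals over the horizon is A > 0, the fraction of dropped packets satisfies (Σ_{t=0}^{T−1} d(t)) / A ≤ N·D · B / ((V − N·D) · A). -/
open Finset

/-- Packet-dropping bound for the truncated system. -/
theorem packet_dropping_bound
    (T N : ℕ) (hT : 1 ≤ T) (hN : 1 ≤ N)
    (D V B : ℝ) (hD : 0 < D) (hV : (N : ℝ) * D < V) (hB : 0 ≤ B)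
    (q d : ℕ → ℝ)
    (hq : ∀ t < T, 0 ≤ q t)
    (hd0 : ∀ t < T, 0 ≤ d t)
    (hdND : ∀ t < T, d t ≤ (N : ℝ) * D)
    (hdrop : ∀ t < T, q t < V - (N : ℝ) * D → d t = 0)
    (hQB : ∑ t ∈ Finset.range T, q t ≤ B) :
    (∑ t ∈ Finset.range T, d t ≤ (N : ℝ) * D * B / (V - (N : ℝ) * D)) ∧
    (∀ A : ℝ, 0 < A →
      (∑ t ∈ Finset.range T, d t) / A ≤ (N : ℝ) * D * B / ((V - (N : ℝ) * D) * A)) := by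
  have hND : (0:ℝ) < (N : ℝ) * D := by positivity
  have hpos : (0:ℝ) < V - (N : ℝ) * D := by linarith
  have key : ∀ t < T, d t ≤ (N : ℝ) * D / (V - (N : ℝ) * D) * q t := by
    intro t ht
    rcases lt_or_ge (q t) (V - (N : ℝ) * D) with h | h
    · rw [hdrop t ht h]
      have := hq t ht
      positivity
    · calc d t ≤ (N : ℝ) * D := hdND t ht
        _ = (N : ℝ) * D / (V - (N : ℝ) * D) * (V - (N : ℝ) * D) := by
            field_simp
        _ ≤ (N : ℝ) * D / (V - (N : ℝ) * D) * q t := by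
            apply mul_le_mul_of_nonneg_left h
            positivity
  have hsum : ∑ t ∈ Finset.range T, d t ≤ (N : ℝ) * D * B / (V - (N : ℝ) * D) := by
    calc ∑ t ∈ Finset.range T, d t
        ≤ ∑ t ∈ Finset.range T, (N : ℝ) * D / (V - (N : ℝ) * D) * q t := by
          apply Finset.sum_le_sum
          intro t ht
          exact key t (Finset.mem_range.mp ht)
      _ = (N : ℝ) * D / (V - (N : ℝ) * D) * ∑ t ∈ Finset.range T, q t := by
          rw [Finset.mul_sum]
      _ ≤ (N : ℝ) * D / (V - (N : ℝ) * D) * B := by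
          apply mul_le_mul_of_nonneg_left hQB
          positivity
      _ = (N : ℝ) * D * B / (V - (N : ℝ) * D) := by ring
  refine ⟨hsum, fun A hA => ?_⟩
  rw [div_le_div_iff₀ hA (by positivity)]
  calc (∑ t ∈ Finset.range T, d t) * ((V - (N : ℝ) * D) * A)
      = ((∑ t ∈ Finset.range T, d t) * (V - (N : ℝ) * D)) * A := by ring
    _ ≤ ((N : ℝ) * D * B) * A := by
        apply mul_le_mul_of_nonneg_right _ hA.le
        rw [← le_div_iff₀ hpos]
        exact hsum
    _ = (N : ℝ) * D * B * A := by ring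
end

section
/- Under these hypotheses, the probability that at least one of the events occurs satisfies P(∪_{ℓ∈L} E_ℓ) ≤ 1/(V^{N+1} A) + 2/V. -/
open MeasureTheory Finset

/-- Union-bound computation from the confidence-set lemma:
`P(⋃_{ℓ∈L} E_ℓ) ≤ 1/(V^{N+1} A) + 2/V`. -/
theorem confidence_union_bound
    {Ω : Type*} [MeasurableSpace Ω] (μ : Measure Ω) [IsProbabilityMeasure μ]
    (T V A N : ℕ) (hT : 2 ≤ T) (hV : 1 ≤ V) (hA : 1 ≤ A) (hN : 1 ≤ N)
    {ι : Type*} [DecidableEq ι] (L : Finset ι) (hL : L.Nonempty)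
    (t : ι → ℕ) (ht : ∀ ℓ ∈ L, 1 ≤ t ℓ)
    (ℓ' : ι) (hℓ' : ℓ' ∈ L)
    (htlog : ∀ ℓ ∈ L, ℓ ≠ ℓ' → Real.logb 2 (T : ℝ) ≤ (t ℓ : ℝ))
    (E : ι → Set Ω) (hmeas : ∀ ℓ ∈ L, MeasurableSet (E ℓ))
    (hPE : ∀ ℓ ∈ L,
      μ (E ℓ) ≤ ENNReal.ofReal (1 / ((t ℓ : ℝ) * (V : ℝ) ^ (N + 1) * (A : ℝ))))
    (hcard : (L.card : ℝ) ≤ 1 + (V : ℝ) ^ N * (A : ℝ) * (Real.logb 2 (T : ℝ) + 1)) :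
    μ (⋃ ℓ ∈ L, E ℓ)
      ≤ ENNReal.ofReal (1 / ((V : ℝ) ^ (N + 1) * (A : ℝ)) + 2 / (V : ℝ)) := by
  set c := Real.logb 2 (T : ℝ) with hc_def
  have hV1 : (1:ℝ) ≤ (V:ℝ) := by exact_mod_cast hV
  have hA1 : (1:ℝ) ≤ (A:ℝ) := by exact_mod_cast hA
  have hVpos : (0:ℝ) < V := by linarith
  have hApos : (0:ℝ) < A := by linarith
  have hVpow : (0:ℝ) < (V:ℝ) ^ (N+1) := by positivity
  have hVpowN : (0:ℝ) < (V:ℝ) ^ N := by positivity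
  have hc1 : (1:ℝ) ≤ c := by
    rw [hc_def]
    calc (1:ℝ) = Real.logb 2 2 := (Real.logb_self_eq_one (by norm_num)).symm
    _ ≤ Real.logb 2 T := Real.logb_le_logb_of_le (by norm_num) (by norm_num) (by exact_mod_cast hT)
  have hcpos : (0:ℝ) < c := by linarith
  set f : ι → ℝ := fun ℓ => 1 / ((t ℓ : ℝ) * (V : ℝ) ^ (N + 1) * (A : ℝ)) with hf_def
  have hfnonneg : ∀ ℓ ∈ L, 0 ≤ f ℓ := fun ℓ _ => by positivity
  have hsum : (∑ ℓ ∈ L, f ℓ) ≤ 1 / ((V : ℝ) ^ (N + 1) * (A : ℝ)) + 2 / (V : ℝ) := by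
    have hsplit : (∑ ℓ ∈ L, f ℓ) = f ℓ' + ∑ ℓ ∈ L.erase ℓ', f ℓ :=
      (Finset.add_sum_erase L f hℓ').symm
    have h1 : f ℓ' ≤ 1 / ((V : ℝ) ^ (N + 1) * (A : ℝ)) := by
      rw [hf_def]
      have ht1 : (1:ℝ) ≤ (t ℓ' : ℝ) := by exact_mod_cast ht ℓ' hℓ'
      apply one_div_le_one_div_of_le (by positivity)
      nlinarith [mul_pos hVpow hApos]
    have h2 : ∑ ℓ ∈ L.erase ℓ', f ℓ ≤
        ((L.erase ℓ').card : ℝ) * (1 / (c * (V : ℝ) ^ (N + 1) * (A : ℝ))) := by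
      rw [← nsmul_eq_mul]
      apply Finset.sum_le_card_nsmul
      intro ℓ hℓ
      have hmem := Finset.mem_of_mem_erase hℓ
      have hne := Finset.ne_of_mem_erase hℓ
      have hlog := htlog ℓ hmem hne
      rw [hf_def]
      apply one_div_le_one_div_of_le (by positivity)
      have : (0:ℝ) < (V:ℝ)^(N+1) * A := by positivity
      nlinarith
    have hcardL : (1:ℝ) ≤ (L.card : ℝ) := by
      exact_mod_cast Finset.card_pos.mpr hL
    have hcarde : ((L.erase ℓ').card : ℝ) = (L.card : ℝ) - 1 := by
      rw [Finset.card_erase_of_mem hℓ']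
      have : 1 ≤ L.card := Finset.card_pos.mpr hL
      push_cast [Nat.cast_sub this]
      ring
    have h3 : ((L.erase ℓ').card : ℝ) ≤ (V:ℝ)^N * A * (c + 1) := by
      rw [hcarde]; linarith
    have h4 : ∑ ℓ ∈ L.erase ℓ', f ℓ ≤ 2 / (V:ℝ) := by
      calc ∑ ℓ ∈ L.erase ℓ', f ℓ
          ≤ ((L.erase ℓ').card : ℝ) * (1 / (c * (V : ℝ) ^ (N + 1) * (A : ℝ))) := h2
        _ ≤ ((V:ℝ)^N * A * (c + 1)) * (1 / (c * (V : ℝ) ^ (N + 1) * (A : ℝ))) := by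
            apply mul_le_mul_of_nonneg_right h3 (by positivity)
        _ = (c + 1) / (c * V) := by
            rw [pow_succ]
            field_simp
        _ ≤ 2 / (V:ℝ) := by
            rw [div_le_div_iff₀ (by positivity) hVpos]
            nlinarith
    linarith [hsplit, h1, h4]
  calc μ (⋃ ℓ ∈ L, E ℓ) ≤ ∑ ℓ ∈ L, μ (E ℓ) := measure_biUnion_finset_le L E
    _ ≤ ∑ ℓ ∈ L, ENNReal.ofReal (f ℓ) := Finset.sum_le_sum (fun ℓ hℓ => hPE ℓ hℓ)
    _ = ENNReal.ofReal (∑ ℓ ∈ L, f ℓ) := (ENNReal.ofReal_sum_of_nonneg hfnonneg).symm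
    _ ≤ _ := ENNReal.ofReal_le_ofReal hsum
end
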